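/- For any Banach function algebra A over a complete nonarchimedean rank-1 valued field k with nontrivial valuation, the subring A° of power-bounded elements is adically closed (A° = ⋂_{r>1} k(r)A°) and coincides with the closed unit ball with respect to the spectral radius function ρ_A. -/

import Mathlib

open Pointwise

/-!
STATEMENT 11: For any Banach function algebra `A` over a complete nonarchimedean
nontrivially valued field `k` (spectral radius `ρ` equivalent to the norm, expressed by
`‖a‖ ≤ C·ρ(a)`), the subring `A°` of power-bounded elements is adically closed
(`A° = ⋂_{r>1} k(r)·A°`) and coincides with the closed unit ball for the spectral radius
function `ρ`.
-/

def kball (k : Type*) [NormedField k] (r : ℝ) : Set k := {c | ‖c‖ ≤ r}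

noncomputable def specRad {A : Type*} [NormedRing A] (a : A) : ℝ :=
  ⨅ n : ℕ+, ‖a ^ (n : ℕ)‖ ^ (((n : ℕ) : ℝ))⁻¹

def PowBdd {A : Type*} [NormedRing A] (a : A) : Prop := ∃ C : ℝ, ∀ n : ℕ, ‖a ^ n‖ ≤ C

lemma specRad_nonneg' {A : Type*} [NormedRing A] (a : A) : 0 ≤ specRad a :=
  le_ciInf fun _ => Real.rpow_nonneg (norm_nonneg _) _

lemma specRad_le' {A : Type*} [NormedRing A] (a : A) (n : ℕ+) :
    specRad a ≤ ‖a ^ (n : ℕ)‖ ^ (((n : ℕ) : ℝ))⁻¹ :=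
  ciInf_le ⟨0, by rintro x ⟨m, rfl⟩; exact Real.rpow_nonneg (norm_nonneg _) _⟩ n

lemma specRad_pow_le_norm {A : Type*} [NormedRing A] (a : A) (n : ℕ+) :
    specRad a ^ (n : ℕ) ≤ ‖a ^ (n : ℕ)‖ := by
  calc specRad a ^ (n : ℕ) ≤ (‖a ^ (n : ℕ)‖ ^ (((n : ℕ) : ℝ))⁻¹) ^ (n : ℕ) :=
        pow_le_pow_left₀ (specRad_nonneg' a) (specRad_le' a n) _
    _ = ‖a ^ (n : ℕ)‖ := Real.rpow_inv_natCast_pow (norm_nonneg _) n.pos.ne'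

lemma specRad_le_of_bound {A : Type*} [NormedRing A] (a : A) {r C : ℝ} (hr : 0 < r)
    (h : ∀ n : ℕ+, ‖a ^ (n : ℕ)‖ ≤ r ^ (n : ℕ) * C) : specRad a ≤ r := by
  by_contra hs
  push_neg at hs
  have h1 : 1 < specRad a / r := (one_lt_div hr).2 hs
  obtain ⟨n, hn⟩ := pow_unbounded_of_one_lt C h1
  have hn' : C < (specRad a / r) ^ (n + 1) :=
    lt_of_lt_of_le hn (pow_le_pow_right₀ h1.le (Nat.le_succ n))
  have h2 : specRad a ^ (n + 1) ≤ r ^ (n + 1) * C := by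
    have := (specRad_pow_le_norm a ⟨n + 1, Nat.succ_pos n⟩).trans (h ⟨n + 1, Nat.succ_pos n⟩)
    simpa using this
  rw [div_pow, lt_div_iff₀ (pow_pos hr _)] at hn'
  nlinarith [hn', h2]

lemma specRad_pow_le {A : Type*} [NormedRing A] (a : A) (n : ℕ+) :
    specRad (a ^ (n : ℕ)) ≤ specRad a ^ (n : ℕ) := by
  by_contra h
  push_neg at h
  set u := specRad (a ^ (n : ℕ)) with hu_def
  have hu : 0 ≤ u := specRad_nonneg' _
  have hs : specRad a < u ^ (((n : ℕ) : ℝ))⁻¹ := by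
    have he : specRad a = (specRad a ^ (n : ℕ)) ^ (((n : ℕ) : ℝ))⁻¹ :=
      (Real.pow_rpow_inv_natCast (specRad_nonneg' a) n.pos.ne').symm
    rw [he]
    exact Real.rpow_lt_rpow (pow_nonneg (specRad_nonneg' a) _) h (by positivity)
  rw [specRad] at hs
  obtain ⟨j, hj⟩ := exists_lt_of_ciInf_lt hs
  have hne : (0 : ℝ) ≤ ‖a ^ (j : ℕ)‖ ^ (((j : ℕ) : ℝ))⁻¹ := Real.rpow_nonneg (norm_nonneg _) _
  have h2 : (‖a ^ (j : ℕ)‖ ^ (((j : ℕ) : ℝ))⁻¹) ^ (n : ℕ) < u := by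
    have := pow_lt_pow_left₀ hj hne n.pos.ne'
    rwa [Real.rpow_inv_natCast_pow hu n.pos.ne'] at this
  have h3 : u ≤ (‖a ^ (j : ℕ)‖ ^ (((j : ℕ) : ℝ))⁻¹) ^ (n : ℕ) := by
    refine (specRad_le' (a ^ (n : ℕ)) j).trans ?_
    have h5 : ‖(a ^ (n : ℕ)) ^ (j : ℕ)‖ ≤ ‖a ^ (j : ℕ)‖ ^ (n : ℕ) := by
      rw [← pow_mul, mul_comm, pow_mul]
      exact norm_pow_le' _ n.pos
    calc ‖(a ^ (n : ℕ)) ^ (j : ℕ)‖ ^ (((j : ℕ) : ℝ))⁻¹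
        ≤ (‖a ^ (j : ℕ)‖ ^ (n : ℕ)) ^ (((j : ℕ) : ℝ))⁻¹ :=
          Real.rpow_le_rpow (norm_nonneg _) h5 (by positivity)
      _ = (‖a ^ (j : ℕ)‖ ^ (((j : ℕ) : ℝ))⁻¹) ^ (n : ℕ) := by
          rw [← Real.rpow_natCast ‖a ^ (j : ℕ)‖ (n : ℕ), ← Real.rpow_mul (norm_nonneg _),
            mul_comm, Real.rpow_mul (norm_nonneg _), Real.rpow_natCast]
  exact lt_irrefl u (h3.trans_lt h2)

lemma powBdd_of_specRad_le_one {A : Type*} [NormedRing A] [NormOneClass A]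
    (hBFA : ∃ C > 0, ∀ a : A, ‖a‖ ≤ C * specRad a) (a : A) (h : specRad a ≤ 1) : PowBdd a := by
  obtain ⟨C, hC, hA⟩ := hBFA
  refine ⟨max C 1, fun n => ?_⟩
  rcases Nat.eq_zero_or_pos n with rfl | hn
  · simp
  · have h1 : ‖a ^ n‖ ≤ C * specRad (a ^ n) := hA _
    have h2 : specRad (a ^ n) ≤ specRad a ^ n := by
      have := specRad_pow_le a ⟨n, hn⟩; simpa using this
    have h3 : specRad a ^ n ≤ 1 := pow_le_one₀ (specRad_nonneg' a) h
    calc ‖a ^ n‖ ≤ C * specRad (a ^ n) := h1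
      _ ≤ C * 1 := by nlinarith [h2.trans h3]
      _ ≤ max C 1 := by simp [le_max_iff, le_of_eq, mul_one]
      
lemma specRad_le_one_of_powBdd {A : Type*} [NormedRing A] (a : A) (h : PowBdd a) :
    specRad a ≤ 1 := by
  obtain ⟨C, hC⟩ := h
  refine specRad_le_of_bound a (C := max C 1) one_pos (fun n => ?_)
  have : ‖a ^ (n : ℕ)‖ ≤ max C 1 := (hC _).trans (le_max_left _ _)
  simpa using this

theorem stmt11 {k A : Type*} [NontriviallyNormedField k] [CompleteSpace k]
    [IsUltrametricDist k] [NormedCommRing A] [NormOneClass A] [IsUltrametricDist A]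
    [NormedAlgebra k A] [CompleteSpace A]
    (hBFA : ∃ C > 0, ∀ a : A, ‖a‖ ≤ C * specRad a) :
    {a : A | PowBdd a} = (⋂ r ∈ Set.Ioi (1 : ℝ), kball k r • {a : A | PowBdd a}) ∧
    {a : A | PowBdd a} = {a : A | specRad a ≤ 1} := by
  constructor
  · apply subset_antisymm
    · intro a ha
      refine Set.mem_iInter₂.2 fun r hr => ?_
      exact Set.mem_smul.2 ⟨1, by simp [kball, le_of_lt (show (1:ℝ) < r from hr)], a, ha, one_smul _ _⟩
    · intro a ha
      have hle : specRad a ≤ 1 := by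
        refine le_of_forall_gt_imp_ge_of_dense fun r hr => ?_
        obtain ⟨c, hc, b, hb, hcb⟩ := Set.mem_smul.1 (Set.mem_iInter₂.1 ha r hr)
        obtain ⟨Cb, hCb⟩ := hb
        refine specRad_le_of_bound a (lt_trans one_pos hr) (C := max Cb 1) fun n => ?_
        have h1 : ‖a ^ (n : ℕ)‖ ≤ ‖c‖ ^ (n : ℕ) * ‖b ^ (n : ℕ)‖ := by
          rw [← hcb, smul_pow]
          simpa using norm_smul_le (c ^ (n : ℕ)) (b ^ (n : ℕ))
        refine h1.trans (mul_le_mul ?_ ((hCb _).trans (le_max_left _ _)) (norm_nonneg _)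
          (by positivity))
        exact pow_le_pow_left₀ (norm_nonneg c) hc _
      exact powBdd_of_specRad_le_one hBFA a hle
  · ext a
    exact ⟨fun h => specRad_le_one_of_powBdd a h, fun h => powBdd_of_specRad_le_one hBFA a h⟩
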